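/- Let m ≥ 2 and f : [m]×[m] → ℝ. Define C : [m−1]×[m−1] → ℝ by C[i,j] = f(i,j) + f(i+1,j+1) − f(i,j+1) − f(i+1,j). Then the maximum over all 1 ≤ i' ≤ i'' ≤ m−1 and 1 ≤ j' ≤ j'' ≤ m−1 of the subarray sum Σ_{i=i'}^{i''} Σ_{j=j'}^{j''} C[i,j] equals the maximum over all 1 ≤ i < i' ≤ m and 1 ≤ j < j' ≤ m of f(i,j) + f(i',j') − f(i,j') − f(i',j). -/

import Mathlib

lemma tele_aux (g : ℕ → ℝ) (a b : ℕ) (h : a ≤ b) :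
    ∑ j ∈ Finset.Icc a b, (g j - g (j + 1)) = g a - g (b + 1) := by
  induction b, h using Nat.le_induction with
  | base => simp
  | succ b hb ih =>
      rw [Finset.sum_Icc_succ_top (by omega), ih]
      ring

theorem stmt_2 (m : ℕ) (hm : 2 ≤ m) (f : ℕ → ℕ → ℝ) (C : ℕ → ℕ → ℝ)
    (hC : ∀ i j : ℕ, 1 ≤ i → i ≤ m - 1 → 1 ≤ j → j ≤ m - 1 →
      C i j = f i j + f (i + 1) (j + 1) - f i (j + 1) - f (i + 1) j) :
    sSup {x : ℝ | ∃ i' i'' j' j'' : ℕ, 1 ≤ i' ∧ i' ≤ i'' ∧ i'' ≤ m - 1 ∧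
        1 ≤ j' ∧ j' ≤ j'' ∧ j'' ≤ m - 1 ∧
        x = ∑ i ∈ Finset.Icc i' i'', ∑ j ∈ Finset.Icc j' j'', C i j}
      = sSup {x : ℝ | ∃ i i' j j' : ℕ, 1 ≤ i ∧ i < i' ∧ i' ≤ m ∧ 1 ≤ j ∧ j < j' ∧ j' ≤ m ∧
          x = f i j + f i' j' - f i j' - f i' j} := by
  have key : ∀ i' i'' j' j'' : ℕ, 1 ≤ i' → i' ≤ i'' → i'' ≤ m - 1 →
      1 ≤ j' → j' ≤ j'' → j'' ≤ m - 1 →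
      ∑ i ∈ Finset.Icc i' i'', ∑ j ∈ Finset.Icc j' j'', C i j
        = f i' j' + f (i'' + 1) (j'' + 1) - f i' (j'' + 1) - f (i'' + 1) j' := by
    intro i' i'' j' j'' h1 h2 h3 h4 h5 h6
    have inner : ∀ i, i ∈ Finset.Icc i' i'' →
        ∑ j ∈ Finset.Icc j' j'', C i j
          = (f i j' - f (i + 1) j') - (f i (j'' + 1) - f (i + 1) (j'' + 1)) := by
      intro i hi
      rw [Finset.mem_Icc] at hi
      have : ∑ j ∈ Finset.Icc j' j'', C i j
          = ∑ j ∈ Finset.Icc j' j'', ((fun j => f i j - f (i + 1) j) j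
              - (fun j => f i j - f (i + 1) j) (j + 1)) := by
        apply Finset.sum_congr rfl
        intro j hj
        rw [Finset.mem_Icc] at hj
        rw [hC i j (by omega) (by omega) (by omega) (by omega)]
        ring
      rw [this, tele_aux _ _ _ h5]
    rw [Finset.sum_congr rfl inner]
    have : ∑ i ∈ Finset.Icc i' i'',
        ((f i j' - f (i + 1) j') - (f i (j'' + 1) - f (i + 1) (j'' + 1)))
        = ∑ i ∈ Finset.Icc i' i'', ((fun i => f i j' - f i (j'' + 1)) i
            - (fun i => f i j' - f i (j'' + 1)) (i + 1)) := by
      apply Finset.sum_congr rfl; intro i _; ring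
    rw [this, tele_aux _ _ _ h2]
    ring
  congr 1
  ext x
  constructor
  · rintro ⟨i', i'', j', j'', h1, h2, h3, h4, h5, h6, rfl⟩
    exact ⟨i', i'' + 1, j', j'' + 1, h1, by omega, by omega, h4, by omega, by omega,
      key i' i'' j' j'' h1 h2 h3 h4 h5 h6⟩
  · rintro ⟨i, i', j, j', h1, h2, h3, h4, h5, h6, rfl⟩
    refine ⟨i, i' - 1, j, j' - 1, h1, by omega, by omega, h4, by omega, by omega, ?_⟩
    rw [key i (i' - 1) j (j' - 1) h1 (by omega) (by omega) h4 (by omega) (by omega)]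
    have e1 : i' - 1 + 1 = i' := by omega
    have e2 : j' - 1 + 1 = j' := by omega
    rw [e1, e2]
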